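/- Let J be a finite-dimensional, unital, positive real Jordan algebra, (c₁,…,c_r) a Jordan frame, λ₁,…,λ_r ∈ ℝ, and x = Σ_{i=1}^r λ_i c_i. Then Der₀(J)·x = Σ_{1≤i≤j≤r, λ_i≠λ_j} J_{ij}, i.e., the set of values at x of inner derivations equals the sum of the Peirce spaces indexed by pairs with distinct coefficients. -/

import Mathlib

open Finset

section JordanPrelim

variable {J : Type*} [AddCommGroup J] [Module ℝ J]

/-- `c` is an idempotent: `c∘c = c`. -/
def IsIdem (jmul : J →ₗ[ℝ] J →ₗ[ℝ] J) (c : J) : Prop := jmul c c = c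

/-- A nonzero idempotent is primitive if it is not the sum of two nonzero idempotents. -/
def IsPrimitive (jmul : J →ₗ[ℝ] J →ₗ[ℝ] J) (c : J) : Prop :=
  IsIdem jmul c ∧ c ≠ 0 ∧
    ¬ ∃ d e : J, IsIdem jmul d ∧ IsIdem jmul e ∧ d ≠ 0 ∧ e ≠ 0 ∧ c = d + e

/-- `(c 1, …, c r)` is a Jordan frame: pairwise orthogonal primitive idempotents
summing to the unit. -/
def IsJordanFrame (jmul : J →ₗ[ℝ] J →ₗ[ℝ] J) (one : J) {r : ℕ} (c : Fin r → J) : Prop :=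
  (∀ i, IsPrimitive jmul (c i)) ∧
  (∀ i j, i ≠ j → jmul (c i) (c j) = 0) ∧
  (∑ i, c i) = one

/-- The Peirce space `J_{ij} = {x | c_k ∘ x = ½(δ_{ki} + δ_{kj}) x for all k}`. -/
noncomputable def Peirce (jmul : J →ₗ[ℝ] J →ₗ[ℝ] J) {r : ℕ} (c : Fin r → J) (i j : Fin r) :
    Submodule ℝ J :=
  ⨅ k : Fin r, LinearMap.ker
    (jmul (c k) -
      (((if k = i then (1 : ℝ) else 0) + (if k = j then 1 else 0)) / 2) • LinearMap.id)

/-- The trace form `τ(x,y) = tr L_{x∘y}`. -/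
noncomputable def tauF (jmul : J →ₗ[ℝ] J →ₗ[ℝ] J) (x y : J) : ℝ :=
  LinearMap.trace ℝ J (jmul (jmul x y))

end JordanPrelim

section Aux
variable {J : Type*} [AddCommGroup J] [Module ℝ J]
variable (jmul : J →ₗ[ℝ] J →ₗ[ℝ] J)

lemma mem_peirce {r : ℕ} (c : Fin r → J) (i j : Fin r) (z : J) :
    z ∈ Peirce jmul c i j ↔
      ∀ k, jmul (c k) z = (((if k = i then (1 : ℝ) else 0) + (if k = j then 1 else 0)) / 2) • z := by
  simp only [Peirce, Submodule.mem_iInf, LinearMap.mem_ker, LinearMap.sub_apply,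
    LinearMap.smul_apply, LinearMap.id_apply, sub_eq_zero]

lemma peirce_symm {r : ℕ} (c : Fin r → J) (i j : Fin r) :
    Peirce jmul c i j = Peirce jmul c j i := by
  unfold Peirce
  exact iInf_congr fun k => by rw [add_comm]

/-- Full linearization of the Jordan identity. -/
lemma T3 (hcomm : ∀ x y : J, jmul x y = jmul y x)
    (hjordan : ∀ x y : J, jmul (jmul x y) (jmul x x) = jmul x (jmul y (jmul x x)))
    (y a b c : J) :
    jmul (jmul a y) (jmul b c) + jmul (jmul b y) (jmul a c) + jmul (jmul c y) (jmul a b)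
      = jmul a (jmul y (jmul b c)) + jmul b (jmul y (jmul a c)) + jmul c (jmul y (jmul a b)) := by
  have G : ∀ x : J, jmul (jmul x y) (jmul x x) - jmul x (jmul y (jmul x x)) = 0 :=
    fun x => sub_eq_zero.mpr (hjordan x y)
  have h1 := G (a + b + c)
  have h2 := G (a + b)
  have h3 := G (a + c)
  have h4 := G (b + c)
  have h5 := G a
  have h6 := G b
  have h7 := G c
  -- six-permutation sum vanishes
  have key : (jmul (jmul a y) (jmul b c) + jmul (jmul a y) (jmul c b)
      + jmul (jmul b y) (jmul a c) + jmul (jmul b y) (jmul c a)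
      + jmul (jmul c y) (jmul a b) + jmul (jmul c y) (jmul b a))
      - (jmul a (jmul y (jmul b c)) + jmul a (jmul y (jmul c b))
      + jmul b (jmul y (jmul a c)) + jmul b (jmul y (jmul c a))
      + jmul c (jmul y (jmul a b)) + jmul c (jmul y (jmul b a)))
      = (jmul (jmul (a+b+c) y) (jmul (a+b+c) (a+b+c)) - jmul (a+b+c) (jmul y (jmul (a+b+c) (a+b+c))))
      - (jmul (jmul (a+b) y) (jmul (a+b) (a+b)) - jmul (a+b) (jmul y (jmul (a+b) (a+b))))
      - (jmul (jmul (a+c) y) (jmul (a+c) (a+c)) - jmul (a+c) (jmul y (jmul (a+c) (a+c))))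
      - (jmul (jmul (b+c) y) (jmul (b+c) (b+c)) - jmul (b+c) (jmul y (jmul (b+c) (b+c))))
      + (jmul (jmul a y) (jmul a a) - jmul a (jmul y (jmul a a)))
      + (jmul (jmul b y) (jmul b b) - jmul b (jmul y (jmul b b)))
      + (jmul (jmul c y) (jmul c c) - jmul c (jmul y (jmul c c))) := by
    simp only [map_add, LinearMap.add_apply]
    abel
  rw [h1, h2, h3, h4, h5, h6, h7] at key
  rw [hcomm c b, hcomm c a, hcomm b a] at key
  have key2 : (2:ℝ) • ((jmul (jmul a y) (jmul b c) + jmul (jmul b y) (jmul a c) + jmul (jmul c y) (jmul a b))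
      - (jmul a (jmul y (jmul b c)) + jmul b (jmul y (jmul a c)) + jmul c (jmul y (jmul a b))))
      = (2:ℝ) • (0 : J) := by
    rw [smul_zero]
    linear_combination (norm := module) key
  have := smul_right_injective J (two_ne_zero) key2
  rw [sub_eq_zero] at this
  exact this

lemma commute_orth (hcomm : ∀ x y : J, jmul x y = jmul y x)
    (hjordan : ∀ x y : J, jmul (jmul x y) (jmul x x) = jmul x (jmul y (jmul x x)))
    {e f : J} (he : jmul e e = e) (hef : jmul e f = 0) (y : J) :
    jmul e (jmul f y) = jmul f (jmul e y) := by
  have h := T3 jmul hcomm hjordan y e e f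
  rw [hef, he] at h
  simp only [map_zero, LinearMap.zero_apply, add_zero, zero_add] at h
  rw [hcomm (jmul f y) e, hcomm y e] at h
  exact h

/-- cubic identity for an idempotent: `2L³z + Lz = 3L²z`. -/
lemma cubic (hcomm : ∀ x y : J, jmul x y = jmul y x)
    (hjordan : ∀ x y : J, jmul (jmul x y) (jmul x x) = jmul x (jmul y (jmul x x)))
    {e : J} (he : jmul e e = e) (z : J) :
    (2:ℝ) • jmul e (jmul e (jmul e z)) + jmul e z = (3:ℝ) • jmul e (jmul e z) := by
  have h := T3 jmul hcomm hjordan e z e e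
  simp only [he] at h
  rw [hcomm z e, hcomm (jmul e z) e] at h
  linear_combination (norm := module) (-1 : ℝ) • h

/-- key Peirce computation lemma -/
lemma key1 (hcomm : ∀ x y : J, jmul x y = jmul y x)
    (hjordan : ∀ x y : J, jmul (jmul x y) (jmul x x) = jmul x (jmul y (jmul x x)))
    {e u v : J} {α β : ℝ} (he : jmul e e = e) (hu : jmul e u = α • u) (hv : jmul e v = β • v)
    (hα : α ≠ 1/2) :
    jmul e (jmul u v) = β • jmul u v := by
  have h := T3 jmul hcomm hjordan v e u e
  rw [hcomm u e, he, hcomm v e, hcomm (jmul u v) e, hu, hv] at h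
  simp only [map_smul, LinearMap.smul_apply, smul_smul] at h
  rw [hcomm v u] at h
  -- now h should be: (β•(α•(jmul u v)) + jmul e (jmul u v) + β•(α•jmul u v)) = α • jmul e (jmul u v) + β • jmul u v + α • jmul e (jmul u v)  (roughly)
  have h2 : ((1:ℝ) - 2*α) • jmul e (jmul u v) = ((1 - 2*α)) • (β • jmul u v) := by
    linear_combination (norm := module) h
  exact smul_right_injective J (by intro hh; apply hα; linarith [hh]; ) h2


noncomputable def muv : Fin 3 → ℝ := ![0, 1/2, 1]

lemma decomp {r : ℕ} (c : Fin r → J) (one : J)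
    (hcomm : ∀ x y : J, jmul x y = jmul y x)
    (hjordan : ∀ x y : J, jmul (jmul x y) (jmul x x) = jmul x (jmul y (jmul x x)))
    (hone : ∀ x : J, jmul one x = x)
    (hidem : ∀ i, jmul (c i) (c i) = c i)
    (horth : ∀ i j, i ≠ j → jmul (c i) (c j) = 0)
    (hsum : (∑ i, c i) = one) (z : J) :
    z ∈ ⨆ q : Fin r × Fin r, Peirce jmul c q.1 q.2 := by
  have memV : ∀ (s : Finset (Fin r)) (f : Fin r → Fin 3) (w : J),
      (w ∈ ⨅ k ∈ s, LinearMap.ker (jmul (c k) - muv (f k) • LinearMap.id)) ↔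
        ∀ k ∈ s, jmul (c k) w = muv (f k) • w := by
    intro s f w
    simp only [Submodule.mem_iInf, LinearMap.mem_ker, LinearMap.sub_apply,
      LinearMap.smul_apply, LinearMap.id_apply, sub_eq_zero]
  -- main induction
  have main : ∀ s : Finset (Fin r),
      (⊤ : Submodule ℝ J) ≤ ⨆ f : Fin r → Fin 3,
        ⨅ k ∈ s, LinearMap.ker (jmul (c k) - muv (f k) • LinearMap.id) := by
    intro s
    induction s using Finset.induction_on with
    | empty =>
      refine le_trans ?_ (le_iSup _ (fun _ => (0 : Fin 3)))
      intro w _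
      rw [memV]
      intro k hk
      exact absurd hk (Finset.notMem_empty k)
    | insert a s ha IH =>
      refine le_trans IH (iSup_le fun f => ?_)
      intro z hz
      rw [memV] at hz
      have cub := cubic jmul hcomm hjordan (hidem a)
      set L : J → J := fun w => jmul (c a) w with hL
      -- the three pieces
      set z0 : J := z - (3:ℝ) • jmul (c a) z + (2:ℝ) • jmul (c a) (jmul (c a) z) with hz0def
      set z1 : J := (4:ℝ) • jmul (c a) z - (4:ℝ) • jmul (c a) (jmul (c a) z) with hz1def
      set z2 : J := (2:ℝ) • jmul (c a) (jmul (c a) z) - jmul (c a) z with hz2def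
      have hsplit : z = z0 + z1 + z2 := by rw [hz0def, hz1def, hz2def]; module
      have hmu : muv 0 = 0 ∧ muv 1 = 1/2 ∧ muv 2 = 1 := by
        refine ⟨?_, ?_, ?_⟩ <;> simp [muv]
      have e0 : jmul (c a) z0 = muv 0 • z0 := by
        rw [hmu.1, zero_smul, hz0def]
        simp only [map_sub, map_add, map_smul]
        linear_combination (norm := module) cub z
      have e1 : jmul (c a) z1 = muv 1 • z1 := by
        rw [hmu.2.1, hz1def]
        simp only [map_sub, map_add, map_smul, smul_sub, smul_smul]
        linear_combination (norm := module) (-2 : ℝ) • cub z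
      have e2 : jmul (c a) z2 = muv 2 • z2 := by
        rw [hmu.2.2, hz2def]
        simp only [map_sub, map_add, map_smul]
        linear_combination (norm := module) cub z
      -- pieces stay in the old eigenspaces
      have hcomk : ∀ k ∈ s, ∀ w : J, jmul (c k) (jmul (c a) w) = jmul (c a) (jmul (c k) w) := by
        intro k hk w
        exact commute_orth jmul hcomm hjordan (hidem k) (horth k a (by rintro rfl; exact ha hk)) w
      have stay : ∀ k ∈ s, ∀ w ∈ ({z0, z1, z2} : Set J), jmul (c k) w = muv (f k) • w := by
        intro k hk w hw
        have h1 : jmul (c k) (jmul (c a) z) = muv (f k) • jmul (c a) z := by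
          rw [hcomk k hk, hz k hk, map_smul]
        have h2 : jmul (c k) (jmul (c a) (jmul (c a) z)) =
            muv (f k) • jmul (c a) (jmul (c a) z) := by
          rw [hcomk k hk, h1, map_smul]
        rcases hw with rfl | rfl | rfl
        · rw [hz0def]; simp only [map_sub, map_add, map_smul, h1, h2, hz k hk]; module
        · rw [hz1def]; simp only [map_sub, map_add, map_smul, h1, h2, hz k hk]; module
        · rw [hz2def]; simp only [map_sub, map_add, map_smul, h1, h2, hz k hk]; module
      have piece : ∀ w ∈ ({z0, z1, z2} : Set J), ∀ v : Fin 3, jmul (c a) w = muv v • w →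
          w ∈ ⨆ f : Fin r → Fin 3,
            ⨅ k ∈ insert a s, LinearMap.ker (jmul (c k) - muv (f k) • LinearMap.id) := by
        intro w hw v hv
        refine le_iSup (fun f : Fin r → Fin 3 =>
          ⨅ k ∈ insert a s, LinearMap.ker (jmul (c k) - muv (f k) • LinearMap.id))
          (Function.update f a v) ?_
        rw [memV]
        intro k hk
        rcases Finset.mem_insert.mp hk with rfl | hks
        · rwa [Function.update_self]
        · rw [Function.update_of_ne (by rintro rfl; exact ha hks)]
          exact stay k hks w hw
      rw [hsplit]
      exact Submodule.add_mem _
        (Submodule.add_mem _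
          (piece z0 (by simp) 0 e0)
          (piece z1 (by simp) 1 e1))
        (piece z2 (by simp) 2 e2)
  -- now use s = univ
  have hz' : z ∈ ⨆ f : Fin r → Fin 3,
      ⨅ k ∈ (univ : Finset (Fin r)), LinearMap.ker (jmul (c k) - muv (f k) • LinearMap.id) :=
    main univ trivial
  refine (iSup_le fun f => ?_ :
    _ ≤ ⨆ q : Fin r × Fin r, Peirce jmul c q.1 q.2) hz'
  intro w hw
  rw [memV] at hw
  simp only [Finset.mem_univ, forall_true_left] at hw
  have sumL : ∑ m, jmul (c m) w = w := by
    rw [← LinearMap.sum_apply, ← map_sum, hsum, hone]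
  have hsum1 : (∑ k, muv (f k)) • w = w := by
    conv_rhs => rw [← sumL]
    rw [Finset.sum_smul]
    exact Finset.sum_congr rfl (fun k _ => (hw k).symm)
  by_cases hone1 : (∑ k, muv (f k)) = 1
  · set A := (univ.filter (fun k => f k = 2)).card with hAdef
    set B := (univ.filter (fun k => f k = 1)).card with hBdef
    have hval : ∀ v : Fin 3, muv v = (if v = 2 then (1:ℝ) else 0) + (if v = 1 then 1/2 else 0) := by
      intro v; fin_cases v <;> norm_num [muv, Fin.ext_iff]
    have hS : (∑ k, muv (f k)) = (A : ℝ) + (B : ℝ) * (1/2 : ℝ) := by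
      rw [Finset.sum_congr rfl fun k _ => hval (f k), Finset.sum_add_distrib]
      congr 1
      · rw [Finset.sum_boole]
      · rw [Finset.sum_congr rfl (fun k _ => show (if f k = 1 then (1:ℝ)/2 else 0) =
            (if f k = 1 then (1:ℝ) else 0) * (1/2) by split <;> norm_num),
          ← Finset.sum_mul, Finset.sum_boole]
    have hAB : 2 * A + B = 2 := by
      have h2 : (2 * A + B : ℝ) = 2 := by
        rw [hS] at hone1; push_cast; linarith
      exact_mod_cast h2
    have hfin : ∀ v : Fin 3, v ≠ 2 → v ≠ 1 → v = 0 := by decide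
    rcases (by omega : (A = 1 ∧ B = 0) ∨ (A = 0 ∧ B = 2)) with ⟨hA, hB⟩ | ⟨hA, hB⟩
    · obtain ⟨i, hAi⟩ := Finset.card_eq_one.mp hA
      refine le_iSup (fun q : Fin r × Fin r => Peirce jmul c q.1 q.2) (i, i) ?_
      rw [mem_peirce]
      intro k
      by_cases hk : k = i
      · subst hk
        have hfk : f k = 2 := by
          have hmem : k ∈ univ.filter (fun k => f k = 2) := by
            rw [hAi]; exact Finset.mem_singleton_self k
          simpa using hmem
        rw [hw k, hfk]
        rw [show muv 2 = 1 by simp [muv]]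
        norm_num [muv]
      · have h2 : f k ≠ 2 := by
          intro h
          have hmem : k ∈ univ.filter (fun k => f k = 2) :=
            Finset.mem_filter.mpr ⟨Finset.mem_univ k, h⟩
          rw [hAi] at hmem
          exact hk (Finset.mem_singleton.mp hmem)
        have h1 : f k ≠ 1 := by
          intro h
          have hmem : k ∈ univ.filter (fun k => f k = 1) :=
            Finset.mem_filter.mpr ⟨Finset.mem_univ k, h⟩
          rw [Finset.card_eq_zero.mp hB] at hmem
          exact absurd hmem (Finset.notMem_empty k)
        rw [hw k, hfin _ h2 h1]
        norm_num [muv, hk]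
    · obtain ⟨i, j, hij, hBij⟩ := Finset.card_eq_two.mp hB
      refine le_iSup (fun q : Fin r × Fin r => Peirce jmul c q.1 q.2) (i, j) ?_
      rw [mem_peirce]
      intro k
      have h2 : f k ≠ 2 := by
        intro h
        have hmem : k ∈ univ.filter (fun k => f k = 2) :=
          Finset.mem_filter.mpr ⟨Finset.mem_univ k, h⟩
        rw [Finset.card_eq_zero.mp hA] at hmem
        exact absurd hmem (Finset.notMem_empty k)
      by_cases hk : k = i ∨ k = j
      · have hfk : f k = 1 := by
          have hmem : k ∈ univ.filter (fun k => f k = 1) := by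
            rw [hBij]
            rcases hk with rfl | rfl <;> simp
          simpa using hmem
        rw [hw k, hfk]
        rcases hk with rfl | rfl
        · have : k ≠ j := fun h => hij h
          norm_num [muv, this]
        · have : k ≠ i := fun h => hij h.symm
          norm_num [muv, this]
      · push_neg at hk
        have h1 : f k ≠ 1 := by
          intro h
          have hmem : k ∈ univ.filter (fun k => f k = 1) :=
            Finset.mem_filter.mpr ⟨Finset.mem_univ k, h⟩
          rw [hBij] at hmem
          simp only [Finset.mem_insert, Finset.mem_singleton] at hmem
          tauto
        rw [hw k, hfin _ h2 h1]
        norm_num [muv, hk.1, hk.2]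
  · have hz0 : ((∑ k, muv (f k)) - 1) • w = ((∑ k, muv (f k)) - 1) • (0 : J) := by
      rw [sub_smul, one_smul, hsum1, sub_self, smul_zero]
    have hw0 := smul_right_injective J (sub_ne_zero.mpr hone1) hz0
    rw [hw0]
    exact Submodule.zero_mem _

lemma sum_pair {r : ℕ} (s t : Fin r) (F : Finset (Fin r)) (hs : s ∈ F) (ht : t ∈ F)
    (hst : s ≠ t) :
    ∑ n ∈ F, ((if n = s then (1:ℝ) else 0) + (if n = t then 1 else 0)) / 2 = 1 := by
  rw [← Finset.sum_div, Finset.sum_add_distrib, Finset.sum_ite_eq' F s (fun _ => (1:ℝ)),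
    Finset.sum_ite_eq' F t (fun _ => (1:ℝ)), if_pos hs, if_pos ht]
  norm_num

/-- one common index: `J_{sm} ∘ J_{mt} ⊆ J_{st}` for `s ≠ t`. -/
lemma prod_one (hcomm : ∀ x y : J, jmul x y = jmul y x)
    (hjordan : ∀ x y : J, jmul (jmul x y) (jmul x x) = jmul x (jmul y (jmul x x)))
    {r : ℕ} {c : Fin r → J} {one : J}
    (hone : ∀ x : J, jmul one x = x)
    (hidem : ∀ i, jmul (c i) (c i) = c i)
    (hsum : (∑ i, c i) = one)
    (s m t : Fin r) (hst : s ≠ t) {u v : J}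
    (hu : u ∈ Peirce jmul c s m) (hv : v ∈ Peirce jmul c m t) :
    jmul u v ∈ Peirce jmul c s t := by
  rw [mem_peirce] at hu hv ⊢
  set w := jmul u v with hw
  -- swapped version of key1
  have key1' : ∀ n : Fin r, ∀ α β : ℝ, jmul (c n) u = α • u → jmul (c n) v = β • v →
      β ≠ 1/2 → jmul (c n) w = α • w := by
    intro n α β hα hβ hne
    rw [hw, hcomm u v]
    exact key1 jmul hcomm hjordan (hidem n) hβ hα hne
  have key1d : ∀ n : Fin r, ∀ α β : ℝ, jmul (c n) u = α • u → jmul (c n) v = β • v →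
      α ≠ 1/2 → jmul (c n) w = β • w := by
    intro n α β hα hβ hne
    exact key1 jmul hcomm hjordan (hidem n) hα hβ hne
  -- the eigen-equation for all n ≠ m
  have hne : ∀ n : Fin r, n ≠ m →
      jmul (c n) w = (((if n = s then (1:ℝ) else 0) + (if n = t then 1 else 0)) / 2) • w := by
    intro n hnm
    by_cases hns : n = s
    · subst hns
      have hnt : n ≠ t := hst
      have h := key1' n _ _ (hu n) (hv n) (by norm_num [hnm, hnt])
      rw [h]
      congr 1
      norm_num [hnm, hnt]
    · have h := key1d n _ _ (hu n) (hv n) (by simp [hns, hnm])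
      rw [h]
      congr 1
      simp [hnm, hns]
  intro n
  by_cases hnm : n = m
  · subst hnm
    -- n = m : three subcases
    by_cases hms : n = s
    · -- u ∈ J_{ss}, α = 1
      have h := key1d n _ _ (hu n) (hv n) (by norm_num [hms])
      rw [h]
      congr 1
      have hnt : n ≠ t := hms ▸ hst
      norm_num [hms, hnt]
    · by_cases hmt : n = t
      · have h := key1' n _ _ (hu n) (hv n) (by norm_num [hmt])
        rw [h]
        congr 1
        norm_num [hms, hmt]
      · -- m ∉ {s,t} : the unit trick
        have sumL : ∑ k, jmul (c k) w = w := by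
          rw [← LinearMap.sum_apply, ← map_sum, hsum, hone]
        have herase : ∑ k ∈ univ.erase n, jmul (c k) w = (1:ℝ) • w := by
          rw [Finset.sum_congr rfl (fun k hk => hne k (Finset.ne_of_mem_erase hk)),
            ← Finset.sum_smul]
          congr 1
          exact sum_pair s t _ (Finset.mem_erase.mpr ⟨fun h => hms h.symm, Finset.mem_univ s⟩)
            (Finset.mem_erase.mpr ⟨fun h => hmt h.symm, Finset.mem_univ t⟩) hst
        have := Finset.add_sum_erase univ (fun k => jmul (c k) w) (Finset.mem_univ n)
        rw [herase, sumL] at this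
        have hzero : jmul (c n) w = 0 := by
          have h4 : jmul (c n) w + (1:ℝ) • w = w := this
          rw [one_smul] at h4
          linear_combination (norm := module) h4
        have hγ : (((if n = s then (1:ℝ) else 0) + if n = t then 1 else 0) / 2) = 0 := by
          norm_num [hms, hmt]
        rw [hγ, zero_smul]
        exact hzero
  · exact hne n hnm

/-- `J_{ss} ∘ J_{kl} = 0` when `s ∉ {k,l}`. -/
lemma prod_zero_diag (hcomm : ∀ x y : J, jmul x y = jmul y x)
    (hjordan : ∀ x y : J, jmul (jmul x y) (jmul x x) = jmul x (jmul y (jmul x x)))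
    {r : ℕ} {c : Fin r → J}
    (hidem : ∀ i, jmul (c i) (c i) = c i)
    (s k l : Fin r) (hsk : s ≠ k) (hsl : s ≠ l) {u v : J}
    (hu : u ∈ Peirce jmul c s s) (hv : v ∈ Peirce jmul c k l) :
    jmul u v = 0 := by
  rw [mem_peirce] at hu hv
  have h1 : jmul (c s) (jmul u v) = (0:ℝ) • jmul u v := by
    have := key1 jmul hcomm hjordan (hidem s) (u := u) (v := v)
      (α := ((if s = s then (1:ℝ) else 0) + (if s = s then 1 else 0)) / 2)
      (β := ((if s = k then (1:ℝ) else 0) + (if s = l then 1 else 0)) / 2)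
      (hu s) (hv s) (by norm_num)
    rw [this]
    congr 1
    simp [hsk, hsl]
  have h2 : jmul (c s) (jmul u v) = (1:ℝ) • jmul u v := by
    rw [hcomm u v]
    have := key1 jmul hcomm hjordan (hidem s)
      (hv s) (hu s) (by simp [hsk, hsl])
    rw [this]
    congr 1
    simp
  have h3 := h1.symm.trans h2
  rw [zero_smul, one_smul] at h3
  exact h3.symm

/-- `J_{ij} ∘ J_{kl} = 0` for disjoint off-diagonal index pairs. -/
lemma prod_zero_disj (hcomm : ∀ x y : J, jmul x y = jmul y x)
    (hjordan : ∀ x y : J, jmul (jmul x y) (jmul x x) = jmul x (jmul y (jmul x x)))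
    {r : ℕ} {c : Fin r → J} {one : J}
    (hone : ∀ x : J, jmul one x = x)
    (hidem : ∀ i, jmul (c i) (c i) = c i)
    (hsum : (∑ i, c i) = one)
    (i j k l : Fin r) (hij : i ≠ j) (hkl : k ≠ l)
    (hik : i ≠ k) (hil : i ≠ l) (hjk : j ≠ k) (hjl : j ≠ l) {u v : J}
    (hu : u ∈ Peirce jmul c i j) (hv : v ∈ Peirce jmul c k l) :
    jmul u v = 0 := by
  rw [mem_peirce] at hu hv
  set w := jmul u v with hw
  have heig : ∀ n : Fin r, jmul (c n) w =
      ((((if n = i then (1:ℝ) else 0) + (if n = j then 1 else 0)) / 2) +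
       (((if n = k then (1:ℝ) else 0) + (if n = l then 1 else 0)) / 2)) • w := by
    intro n
    by_cases hni : n = i ∨ n = j
    · have hnk : n ≠ k := by rcases hni with rfl | rfl <;> assumption
      have hnl : n ≠ l := by rcases hni with rfl | rfl <;> assumption
      have h := key1 jmul hcomm hjordan (hidem n) (hv n) (hu n) (by simp [hnk, hnl])
      rw [hw, hcomm u v, h]
      congr 1
      simp [hnk, hnl]
    · push_neg at hni
      have h := key1 jmul hcomm hjordan (hidem n) (hu n) (hv n) (by simp [hni.1, hni.2])
      rw [hw, h]
      congr 1
      simp [hni.1, hni.2]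
  have sumL : ∑ n, jmul (c n) w = w := by
    rw [← LinearMap.sum_apply, ← map_sum, hsum, hone]
  have : (2:ℝ) • w = w := by
    conv_rhs => rw [← sumL]
    rw [Finset.sum_congr rfl (fun n _ => heig n), ← Finset.sum_smul]
    congr 1
    rw [Finset.sum_add_distrib, sum_pair i j univ (Finset.mem_univ i) (Finset.mem_univ j) hij,
      sum_pair k l univ (Finset.mem_univ k) (Finset.mem_univ l) hkl]
    norm_num
  have h10 : (1:ℝ) • w = (1:ℝ) • (0:J) := by
    rw [smul_zero]
    linear_combination (norm := module) this
  exact smul_right_injective J one_ne_zero h10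

lemma jmul_x (hcomm : ∀ x y : J, jmul x y = jmul y x) {r : ℕ} {c : Fin r → J} (lam : Fin r → ℝ)
    {i j : Fin r} {z : J} (hz : z ∈ Peirce jmul c i j) :
    jmul (∑ m, lam m • c m) z = ((lam i + lam j) / 2) • z := by
  rw [mem_peirce] at hz
  have key : ∀ m, lam m * (((if m = i then (1:ℝ) else 0) + if m = j then 1 else 0) / 2)
      = (if m = i then lam m else 0) / 2 + (if m = j then lam m else 0) / 2 := by
    intro m; split_ifs <;> ring
  rw [map_sum, LinearMap.sum_apply,
    Finset.sum_congr rfl (fun m _ => by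
      rw [LinearMap.map_smul, LinearMap.smul_apply, hz m, smul_smul, key m]),
    ← Finset.sum_smul]
  congr 1
  rw [Finset.sum_add_distrib, ← Finset.sum_div, ← Finset.sum_div,
    Finset.sum_ite_eq' univ i lam, Finset.sum_ite_eq' univ j lam,
    if_pos (Finset.mem_univ i), if_pos (Finset.mem_univ j)]
  ring

end Aux

/-- for `x = Σ λ_i c_i`, the set `Der₀(J)·x` of values at `x` of inner
derivations (the span of commutators `[L_u, L_v]`) equals the sum of the Peirce
spaces `J_{ij}` with `λ_i ≠ λ_j`. -/
theorem stmt9 (J : Type*) [AddCommGroup J] [Module ℝ J] [FiniteDimensional ℝ J]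
    (jmul : J →ₗ[ℝ] J →ₗ[ℝ] J)
    (hcomm : ∀ x y : J, jmul x y = jmul y x)
    (hjordan : ∀ x y : J, jmul (jmul x y) (jmul x x) = jmul x (jmul y (jmul x x)))
    (one : J) (hone : ∀ x : J, jmul one x = x)
    (hpos : ∀ x : J, x ≠ 0 → 0 < tauF jmul x x)
    (r : ℕ) (c : Fin r → J) (hframe : IsJordanFrame jmul one c)
    (lam : Fin r → ℝ) :
    Submodule.map
        (LinearMap.applyₗ (∑ i, lam i • c i) : (J →ₗ[ℝ] J) →ₗ[ℝ] J)
        (Submodule.span ℝ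
          {D : J →ₗ[ℝ] J | ∃ u v : J, D = (jmul u) ∘ₗ (jmul v) - (jmul v) ∘ₗ (jmul u)}) =
      ⨆ (i : Fin r) (j : Fin r) (_ : i ≤ j) (_ : lam i ≠ lam j),
        Peirce jmul c i j := by
  obtain ⟨hprim, horth, hsum⟩ := hframe
  have hidem : ∀ i, jmul (c i) (c i) = c i := fun i => (hprim i).1
  set x : J := ∑ i, lam i • c i with hxdef
  set R : Submodule ℝ J :=
    ⨆ (i : Fin r) (j : Fin r) (_ : i ≤ j) (_ : lam i ≠ lam j), Peirce jmul c i j with hRdef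
  have hcmem : ∀ j : Fin r, c j ∈ Peirce jmul c j j := by
    intro j
    rw [mem_peirce]
    intro k
    by_cases hk : k = j
    · subst hk
      rw [hidem k]
      norm_num
    · rw [horth k j hk]
      norm_num [hk]
  have peirce_le : ∀ s t : Fin r, lam s ≠ lam t → Peirce jmul c s t ≤ R := by
    intro s t hst
    rcases le_total s t with h | h
    · exact le_iSup_of_le s (le_iSup_of_le t (le_iSup_of_le h (le_iSup_of_le hst le_rfl)))
    · rw [peirce_symm]
      exact le_iSup_of_le t (le_iSup_of_le s (le_iSup_of_le h (le_iSup_of_le (Ne.symm hst) le_rfl)))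
  apply le_antisymm
  · -- ⊆ : values of inner derivations land in R
    rw [Submodule.map_span, Submodule.span_le]
    rintro _ ⟨D, ⟨u, v, rfl⟩, rfl⟩
    have happ : (LinearMap.applyₗ x : (J →ₗ[ℝ] J) →ₗ[ℝ] J)
        ((jmul u) ∘ₗ (jmul v) - (jmul v) ∘ₗ (jmul u))
        = jmul u (jmul v x) - jmul v (jmul u x) := rfl
    rw [SetLike.mem_coe, happ]
    -- the key generator lemma
    have main2 : ∀ (i j : Fin r), ∀ u' ∈ Peirce jmul c i j, ∀ (k l : Fin r),
        ∀ v' ∈ Peirce jmul c k l,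
        jmul u' (jmul v' x) - jmul v' (jmul u' x) ∈ R := by
      intro i j u' hu' k l v' hv'
      have hexpr : jmul u' (jmul v' x) - jmul v' (jmul u' x)
          = (((lam k + lam l) - (lam i + lam j)) / 2) • jmul u' v' := by
        rw [hcomm v' x, hcomm u' x, hxdef, jmul_x jmul hcomm lam hv', jmul_x jmul hcomm lam hu']
        have h1 : jmul v' (((lam i + lam j)/2) • u') = ((lam i + lam j)/2) • jmul u' v' := by
          rw [LinearMap.map_smul, hcomm v' u']
        have h2 : jmul u' (((lam k + lam l)/2) • v') = ((lam k + lam l)/2) • jmul u' v' :=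
          LinearMap.map_smul _ _ _
        rw [h1, h2]
        module
      rw [hexpr]
      by_cases hjk : j = k
      · subst hjk
        by_cases hil : i = l
        · subst hil
          rw [show ((lam j + lam i) - (lam i + lam j)) / 2 = 0 by ring, zero_smul]
          exact Submodule.zero_mem R
        · have hw := prod_one jmul hcomm hjordan hone hidem hsum i j l hil hu' hv'
          by_cases hlm : lam i = lam l
          · rw [show ((lam j + lam l) - (lam i + lam j)) / 2 = 0 by rw [hlm]; ring, zero_smul]
            exact Submodule.zero_mem R
          · exact Submodule.smul_mem R _ (peirce_le i l hlm hw)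
      · by_cases hjl : j = l
        · subst hjl
          rw [peirce_symm] at hv'
          by_cases hik : i = k
          · subst hik
            rw [show ((lam i + lam j) - (lam i + lam j)) / 2 = 0 by ring, zero_smul]
            exact Submodule.zero_mem R
          · have hw := prod_one jmul hcomm hjordan hone hidem hsum i j k hik hu' hv'
            by_cases hlm : lam i = lam k
            · rw [show ((lam k + lam j) - (lam i + lam j)) / 2 = 0 by rw [hlm]; ring, zero_smul]
              exact Submodule.zero_mem R
            · exact Submodule.smul_mem R _ (peirce_le i k hlm hw)
        · by_cases hik : i = k
          · subst hik
            rw [peirce_symm] at hv'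
            have hw := prod_one jmul hcomm hjordan hone hidem hsum l i j
              (fun h => hjl h.symm) hv' hu'
            rw [hcomm u' v']
            by_cases hlm : lam l = lam j
            · rw [show ((lam i + lam l) - (lam i + lam j)) / 2 = 0 by rw [hlm]; ring, zero_smul]
              exact Submodule.zero_mem R
            · exact Submodule.smul_mem R _ (peirce_le l j hlm hw)
          · by_cases hil : i = l
            · subst hil
              have hw := prod_one jmul hcomm hjordan hone hidem hsum k i j
                (fun h => hjk h.symm) hv' hu'
              rw [hcomm u' v']
              by_cases hlm : lam k = lam j
              · rw [show ((lam k + lam i) - (lam i + lam j)) / 2 = 0 by rw [hlm]; ring, zero_smul]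
                exact Submodule.zero_mem R
              · exact Submodule.smul_mem R _ (peirce_le k j hlm hw)
            · -- disjoint cases
              by_cases hij : i = j
              · subst hij
                rw [prod_zero_diag jmul hcomm hjordan hidem i k l hik hil hu' hv', smul_zero]
                exact Submodule.zero_mem R
              · by_cases hkl : k = l
                · subst hkl
                  rw [hcomm u' v',
                    prod_zero_diag jmul hcomm hjordan hidem k i j
                      (fun h => hik h.symm) (fun h => hjk h.symm) hv' hu', smul_zero]
                  exact Submodule.zero_mem R
                · rw [prod_zero_disj jmul hcomm hjordan hone hidem hsum i j k l
                    hij hkl hik hil hjk hjl hu' hv', smul_zero]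
                  exact Submodule.zero_mem R
    -- decompose u and v
    have hdec : ∀ z : J, z ∈ ⨆ q : Fin r × Fin r, Peirce jmul c q.1 q.2 :=
      decomp jmul c one hcomm hjordan hone hidem horth hsum
    refine Submodule.iSup_induction _ (hdec u)
      (motive := fun u' => jmul u' (jmul v x) - jmul v (jmul u' x) ∈ R) ?_ ?_ ?_
    · intro q u' hu'
      refine Submodule.iSup_induction _ (hdec v)
        (motive := fun v' => jmul u' (jmul v' x) - jmul v' (jmul u' x) ∈ R) ?_ ?_ ?_
      · intro q' v' hv'
        exact main2 q.1 q.2 u' hu' q'.1 q'.2 v' hv'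
      · show jmul u' (jmul (0:J) x) - jmul (0:J) (jmul u' x) ∈ R
        have h0 : jmul u' (jmul (0:J) x) - jmul (0:J) (jmul u' x) = 0 := by simp
        rw [h0]
        exact Submodule.zero_mem R
      · intro y z hy hz
        show jmul u' (jmul (y + z) x) - jmul (y + z) (jmul u' x) ∈ R
        have : jmul u' (jmul (y + z) x) - jmul (y + z) (jmul u' x)
            = (jmul u' (jmul y x) - jmul y (jmul u' x))
              + (jmul u' (jmul z x) - jmul z (jmul u' x)) := by
          simp only [map_add, LinearMap.add_apply]
          abel
        rw [this]
        exact Submodule.add_mem R hy hz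
    · show jmul (0:J) (jmul v x) - jmul v (jmul (0:J) x) ∈ R
      have h0 : jmul (0:J) (jmul v x) - jmul v (jmul (0:J) x) = 0 := by simp
      rw [h0]
      exact Submodule.zero_mem R
    · intro y z hy hz
      show jmul (y + z) (jmul v x) - jmul v (jmul (y + z) x) ∈ R
      have : jmul (y + z) (jmul v x) - jmul v (jmul (y + z) x)
          = (jmul y (jmul v x) - jmul v (jmul y x))
            + (jmul z (jmul v x) - jmul v (jmul z x)) := by
        simp only [map_add, LinearMap.add_apply]
        abel
      rw [this]
      exact Submodule.add_mem R hy hz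
  · -- ⊇ : each Peirce space with distinct eigenvalues is hit
    refine iSup_le fun i => iSup_le fun j => iSup_le fun hij => iSup_le fun hlam => ?_
    intro z hz
    have hij' : i ≠ j := by rintro rfl; exact hlam rfl
    have hD : ((jmul z) ∘ₗ (jmul (c j)) - (jmul (c j)) ∘ₗ (jmul z) : J →ₗ[ℝ] J) ∈
        Submodule.span ℝ
          {D : J →ₗ[ℝ] J | ∃ u v : J, D = (jmul u) ∘ₗ (jmul v) - (jmul v) ∘ₗ (jmul u)} :=
      Submodule.subset_span ⟨z, c j, rfl⟩
    refine Submodule.mem_map.mpr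
      ⟨(4 / (lam j - lam i)) • ((jmul z) ∘ₗ (jmul (c j)) - (jmul (c j)) ∘ₗ (jmul z)),
        Submodule.smul_mem _ _ hD, ?_⟩
    have hc : jmul (c j) z = (1/2 : ℝ) • z := by
      rw [(mem_peirce jmul c i j z).mp hz j]
      congr 1
      norm_num [Ne.symm hij']
    have hxz : jmul z x = ((lam i + lam j) / 2) • z := by
      rw [hcomm z x, hxdef, jmul_x jmul hcomm lam hz]
    have hxc : jmul (c j) x = lam j • c j := by
      rw [hcomm (c j) x, hxdef, jmul_x jmul hcomm lam (hcmem j)]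
      congr 1
      ring
    have happ : (LinearMap.applyₗ x : (J →ₗ[ℝ] J) →ₗ[ℝ] J)
        ((4 / (lam j - lam i)) • ((jmul z) ∘ₗ (jmul (c j)) - (jmul (c j)) ∘ₗ (jmul z)))
        = (4 / (lam j - lam i)) • (jmul z (jmul (c j) x) - jmul (c j) (jmul z x)) := rfl
    rw [happ, hxc, hxz, map_smul, map_smul, hcomm z (c j), hc]
    rw [smul_smul, smul_smul, ← sub_smul, smul_smul]
    have hscal : 4 / (lam j - lam i) * (lam j * (1/2) - (lam i + lam j) / 2 * (1/2)) = 1 := by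
      have hne : lam j - lam i ≠ 0 := sub_ne_zero.mpr (Ne.symm hlam)
      field_simp
      ring
    rw [hscal, one_smul]
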